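/- Let F = (W, ≤) be a finite rooted quasi-ordered S4.1-frame. Then F is a 1-roach if and only if F has a unique maximal point (i.e., F is an S4.1.2-frame). -/

import Mathlib

/-- `m` is a maximal point: `↑m = {m}`. -/
def IsMaxPt {W : Type*} (le : W → W → Prop) (m : W) : Prop :=
  ∀ x, le m x → x = m

/-- The depth of `w` is at most `n`: every strictly ascending chain (each step goes up and
not back down, i.e. moves to a strictly higher cluster) starting at `w` has length at most
`n`. -/
def DepthLE {W : Type*} (le : W → W → Prop) (w : W) (n : ℕ) : Prop :=
  ∀ l : List W, l.head? = some w → l.Chain' (fun a b => le a b ∧ ¬ le b a) → l.length ≤ n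

/-- `s` is a splitting point witnessing the `n`-roach condition: `s` has depth at most `n`,
the up-set `↑s` is partially ordered (the restriction of `le` is antisymmetric on it), and
for every `w` there is `t_w ∈ ↑s` with `↑w ∩ ↑s = ↑t_w`. -/
def IsSplittingPoint {W : Type*} (le : W → W → Prop) (n : ℕ) (s : W) : Prop :=
  DepthLE le s n ∧
  (∀ a b, le s a → le s b → le a b → le b a → a = b) ∧
  (∀ w, ∃ t, le s t ∧ ∀ x, (le w x ∧ le s x) ↔ le t x)

/-- An `n`-roach: a frame possessing a splitting point of depth at most `n`. -/
def IsNRoach {W : Type*} (le : W → W → Prop) (n : ℕ) : Prop :=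
  ∃ s, IsSplittingPoint le n s

/-- A finite rooted S4.1-frame is a 1-roach iff it has a unique maximal point
(i.e. it is an S4.1.2-frame). -/
theorem stmt_12 {W : Type*} [Fintype W] (le : W → W → Prop)
    (hrefl : ∀ w, le w w)
    (htrans : ∀ a b c, le a b → le b c → le a c)
    (hroot : ∃ r, ∀ w, le r w)
    (hs41 : ∀ w, ∃ m, le w m ∧ IsMaxPt le m) :
    IsNRoach le 1 ↔ ∃! m, IsMaxPt le m := by
  constructor
  · rintro ⟨s, hdepth, hanti, hsplit⟩
    -- First: anything above s is equal to s, i.e. s is maximal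
    have hmax : IsMaxPt le s := by
      intro x hx
      by_cases hxs : le x s
      · exact hanti x s hx (hrefl s) hxs hx
      · exfalso
        have := hdepth [s, x] rfl (by
          simp [List.Chain', List.isChain_cons_cons, hx, hxs])
        simp at this
    -- Everything is below s
    have hbelow : ∀ w, le w s := by
      intro w
      obtain ⟨t, hst, ht⟩ := hsplit w
      have : le t s := by
        rw [hmax t hst]; exact hrefl s
      have := (ht s).mpr this
      exact this.1
    refine ⟨s, hmax, ?_⟩
    intro m hm
    exact (hm s (hbelow m)).symm
  · rintro ⟨m, hm, huniq⟩
    have hbelow : ∀ w, le w m := by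
      intro w
      obtain ⟨m', hwm', hm'⟩ := hs41 w
      rw [huniq m' hm'] at hwm'
      exact hwm'
    refine ⟨m, ?_, ?_, ?_⟩
    · intro l hhead hchain
      match l with
      | [] => simp
      | [a] => simp
      | a :: b :: rest =>
        exfalso
        simp only [List.head?] at hhead
        have hab : a = m := by injection hhead
        subst hab
        simp only [List.Chain', List.isChain_cons_cons] at hchain
        obtain ⟨⟨h1, h2⟩, _⟩ := hchain
        exact h2 (by rw [hm b h1]; exact hrefl a)
    · intro a b ha hb _ _
      rw [hm a ha, hm b hb]
    · intro w
      refine ⟨m, hrefl m, fun x => ⟨fun ⟨_, h⟩ => h, fun h => ⟨?_, h⟩⟩⟩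
      rw [hm x h]; exact hbelow w
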